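/- Let t ≥ 2 and h ≥ 1 be integers and set n = h(2t+2). Consider the binary words x1 = 0^{ht−1} 1 0^{h(t+2)} and x2 = 0^{ht} 1 0^{h(t+2)−1} of length n, and let M = C(n,t) − C(ht−1, ⌊t/2⌋)·C(h(t+2)−1, ⌈t/2⌉). Then: (1) there exist sets D1 and D2 of deletion vectors for length-n words, each vector of weight exactly t, with |D1| = |D2| = M, such that the output multiset of D1 on x1 equals the output multiset of D2 on x2; and (2) for any such pair of sets of weight-exactly-t deletion vectors with equal output multisets on x1 and x2, |D1| ≤ M. In other words, exactly M + 1 channels are enough to distinguish x1 from x2 in the multiset model with exactly t deletions per channel. -/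

import Mathlib

/-- Applying a deletion vector `S` (a set of coordinate positions) to a word
`x` of length `n`: delete the entries at positions in `S`, keeping the rest in order. -/
def delWord {q n : ℕ} (x : Fin n → Fin q) (S : Finset (Fin n)) : List (Fin q) :=
  ((Finset.univ \ S).sort (· ≤ ·)).map x


open Finset

namespace DelAux

/-- index lemma: the `j`-th element of the sorted list of `s` equals `p` iff
`j` is the number of elements of `s` below `p`. -/
lemma orderEmbOfFin_eq_iff {α : Type*} [LinearOrder α] (s : Finset α) {k : ℕ}
    (hk : s.card = k) {p : α} (hp : p ∈ s) (j : Fin k) :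
    s.orderEmbOfFin hk j = p ↔ (j : ℕ) = (s.filter (· < p)).card := by
  set f := s.orderEmbOfFin hk with hf
  have hinj : Function.Injective f := (s.orderEmbOfFin hk).injective
  set j0 : Fin k := (s.orderIsoOfFin hk).symm ⟨p, hp⟩ with hj0def
  have hj0 : f j0 = p := congrArg Subtype.val ((s.orderIsoOfFin hk).apply_symm_apply ⟨p, hp⟩)
  have hcardeq : (s.filter (· < p)).card = (j0 : ℕ) := by
    have himg : s.filter (· < p) = (Finset.univ.filter (fun i : Fin k => i < j0)).image f := by
      ext a
      simp only [Finset.mem_filter, Finset.mem_image, Finset.mem_univ, true_and]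
      constructor
      · rintro ⟨ha, hlt⟩
        refine ⟨(s.orderIsoOfFin hk).symm ⟨a, ha⟩, ?_, ?_⟩
        · rw [hj0def]
          exact (OrderIso.lt_iff_lt _).2 (Subtype.mk_lt_mk.2 hlt)
        · exact congrArg Subtype.val ((s.orderIsoOfFin hk).apply_symm_apply ⟨a, ha⟩)
      · rintro ⟨i, hi, rfl⟩
        refine ⟨Finset.orderEmbOfFin_mem s hk i, ?_⟩
        have := (s.orderEmbOfFin hk).strictMono hi
        rw [← hj0] ; exact this
    rw [himg, Finset.card_image_of_injective _ hinj]
    have : Finset.univ.filter (fun i : Fin k => i < j0) = Finset.Iio j0 := by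
      ext i; simp
    rw [this, Fin.card_Iio]
  constructor
  · intro h
    have : j = j0 := hinj (h.trans hj0.symm)
    rw [this, hcardeq]
  · intro h
    have : j = j0 := Fin.ext (by rw [h, hcardeq])
    rw [this, hj0]


def outList (L a : ℕ) : List (Fin 2) := (List.range L).map fun i => if i = a then 1 else 0

def cnt {n : ℕ} (p : Fin n) (S : Finset (Fin n)) : ℕ := (S.filter (· < p)).card

def ix {n : ℕ} (p : Fin n) (S : Finset (Fin n)) : ℕ :=
  if p ∈ S then n - S.card else (p : ℕ) - cnt p S

lemma cnt_le_card {n : ℕ} (p : Fin n) (S : Finset (Fin n)) : cnt p S ≤ S.card :=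
  Finset.card_le_card (Finset.filter_subset _ _)

lemma cnt_le {n : ℕ} (p : Fin n) (S : Finset (Fin n)) : cnt p S ≤ (p : ℕ) := by
  have : S.filter (· < p) ⊆ Finset.Iio p := fun a ha => by
    simp only [Finset.mem_Iio]; exact (Finset.mem_filter.1 ha).2
  simpa [cnt, Fin.card_Iio] using Finset.card_le_card this

lemma ix_le {n : ℕ} (p : Fin n) (S : Finset (Fin n)) (hp : (p : ℕ) < n - S.card) :
    ix p S ≤ n - S.card := by
  unfold ix; split
  · exact le_rfl
  · omega

@[simp] lemma outList_length (L a : ℕ) : (outList L a).length = L := by simp [outList]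

lemma outList_inj {L a b : ℕ} (ha : a ≤ L) (hb : b ≤ L) (h : outList L a = outList L b) :
    a = b := by
  by_contra hne
  rcases Nat.lt_or_ge a b with hab | hab
  · have ha' : a < L := lt_of_lt_of_le hab hb
    have := congrArg (fun l : List (Fin 2) => l[a]?) h
    simp [outList, List.getElem?_map, ha', Nat.ne_of_lt hab] at this
  · have hba : b < a := lt_of_le_of_ne hab (Ne.symm hne)
    have hb' : b < L := lt_of_lt_of_le hba ha
    have := congrArg (fun l : List (Fin 2) => l[b]?) h
    simp [outList, List.getElem?_map, hb', Nat.ne_of_gt hba] at this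
    exact hne this.symm

lemma delWord_single {n : ℕ} (p : Fin n) (S : Finset (Fin n)) :
    delWord (fun i => if (i : ℕ) = (p : ℕ) then (1 : Fin 2) else 0) S
      = outList (n - S.card) (ix p S) := by
  have hcard : (Finset.univ \ S).card = n - S.card := by
    rw [Finset.card_sdiff_of_subset (Finset.subset_univ S), Finset.card_univ, Fintype.card_fin]
  have hlen : (delWord (fun i => if (i : ℕ) = (p : ℕ) then (1 : Fin 2) else 0) S).length
      = n - S.card := by
    simp [delWord, Finset.length_sort, hcard]
  apply List.ext_getElem
  · simp [hlen]
  intro j h1 h2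
  rw [hlen] at h1
  have h2' : j < n - S.card := by simpa using h2
  have hjs : j < ((Finset.univ \ S).sort (· ≤ ·)).length := by
    rwa [Finset.length_sort, hcard]
  have hjc : j < (Finset.univ \ S).card := by rwa [hcard]
  have hget : ((Finset.univ \ S).sort (· ≤ ·))[j] =
      (Finset.univ \ S).orderEmbOfFin hcard ⟨j, h2'⟩ := rfl
  simp only [delWord, List.getElem_map, outList, List.getElem_range]
  rw [hget]
  by_cases hpS : p ∈ S
  · have hne : ((Finset.univ \ S).orderEmbOfFin hcard ⟨j, h2'⟩ : Fin n) ≠ p := by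
      intro hEq
      have := Finset.orderEmbOfFin_mem (Finset.univ \ S) hcard ⟨j, h2'⟩
      rw [hEq] at this
      simp [Finset.mem_sdiff, hpS] at this
    have hix : ix p S = n - S.card := by simp [ix, hpS]
    rw [if_neg (fun hv => hne (Fin.ext hv)), if_neg (by omega)]
  · have hpmem : p ∈ Finset.univ \ S := by simp [Finset.mem_sdiff, hpS]
    have hiff := orderEmbOfFin_eq_iff (Finset.univ \ S) hcard hpmem ⟨j, h2'⟩
    have hfc : ((Finset.univ \ S).filter (· < p)).card = (p : ℕ) - cnt p S := by
      have hsplit : (Finset.univ \ S).filter (· < p)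
          = (Finset.univ.filter (· < p)) \ (S.filter (· < p)) := by
        ext a
        simp only [Finset.mem_filter, Finset.mem_sdiff, Finset.mem_univ, true_and]
        tauto
      have hsub : S.filter (· < p) ⊆ Finset.univ.filter (· < p) :=
        Finset.filter_subset_filter _ (Finset.subset_univ S)
      have huniv : (Finset.univ.filter (· < p)).card = (p : ℕ) := by
        have : Finset.univ.filter (· < p) = Finset.Iio p := by ext a; simp
        rw [this, Fin.card_Iio]
      rw [hsplit, Finset.card_sdiff_of_subset hsub, huniv]
      rfl
    have hix : ix p S = (p : ℕ) - cnt p S := by simp [ix, hpS]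
    have hiff2 : (((Finset.univ \ S).orderEmbOfFin hcard ⟨j, h2'⟩ : Fin n) : ℕ) = (p : ℕ)
        ↔ j = ix p S := by
      rw [← Fin.ext_iff, hiff, hfc, hix]
    by_cases hc : (((Finset.univ \ S).orderEmbOfFin hcard ⟨j, h2'⟩ : Fin n) : ℕ) = (p : ℕ)
    · rw [if_pos hc, if_pos (hiff2.1 hc)]
    · rw [if_neg hc, if_neg (fun hj => hc (hiff2.2 hj))]

end DelAux

namespace DelAux2
variable {n : ℕ}
open DelAux (cnt)

def cls (t : ℕ) (p : Fin n) (c : ℕ) : Finset (Finset (Fin n)) :=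
  (Finset.univ.powersetCard t).filter (fun S => p ∉ S ∧ cnt p S = c)

lemma card_cls (t : ℕ) (p : Fin n) (c : ℕ) (hc : c ≤ t) :
    (cls t p c).card = Nat.choose p c * Nat.choose (n - 1 - p) (t - c) := by
  have key : (cls t p c).card
      = ((Finset.Iio p).powersetCard c ×ˢ (Finset.Ioi p).powersetCard (t - c)).card := by
    refine Finset.card_bij' (fun S _ => (S.filter (· < p), S.filter (p < ·)))
      (fun pq _ => pq.1 ∪ pq.2) ?_ ?_ ?_ ?_
    case refine_1 =>
      intro S hS
      simp only [cls, Finset.mem_filter, Finset.mem_powersetCard_univ] at hS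
      obtain ⟨hcard, hpS, hcnt⟩ := hS
      have hsplit : S.filter (· < p) ∪ S.filter (p < ·) = S := by
        ext a
        simp only [Finset.mem_union, Finset.mem_filter]
        constructor
        · rintro (⟨h, _⟩ | ⟨h, _⟩) <;> exact h
        · intro ha
          rcases lt_or_gt_of_ne (fun h : a = p => hpS (h ▸ ha)) with h | h
          · exact Or.inl ⟨ha, h⟩
          · exact Or.inr ⟨ha, h⟩
      have hdisj : Disjoint (S.filter (· < p)) (S.filter (p < ·)) := by
        rw [Finset.disjoint_left]
        intro a ha hb
        have h1 := (Finset.mem_filter.1 ha).2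
        have h2 := (Finset.mem_filter.1 hb).2
        exact absurd (h1.trans h2) (lt_irrefl a)
      have hcards : c + (S.filter (p < ·)).card = t := by
        rw [← hcnt]
        show cnt p S + _ = t
        rw [cnt, ← Finset.card_union_of_disjoint hdisj, hsplit, hcard]
      simp only [Finset.mem_product, Finset.mem_powersetCard]
      refine ⟨⟨fun a ha => ?_, hcnt⟩, fun a ha => ?_, by omega⟩
      · simp only [Finset.mem_Iio]; exact (Finset.mem_filter.1 ha).2
      · simp only [Finset.mem_Ioi]; exact (Finset.mem_filter.1 ha).2
    case refine_2 =>
      intro pq hpq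
      rw [Finset.mem_product, Finset.mem_powersetCard, Finset.mem_powersetCard] at hpq
      obtain ⟨⟨ha, hac⟩, hb, hbc⟩ := hpq
      have hAlt : ∀ a ∈ pq.1, a < p := fun a h => Finset.mem_Iio.1 (ha h)
      have hBgt : ∀ a ∈ pq.2, p < a := fun a h => Finset.mem_Ioi.1 (hb h)
      have hdisj : Disjoint pq.1 pq.2 := by
        rw [Finset.disjoint_left]
        intro a h1 h2
        exact absurd ((hAlt a h1).trans (hBgt a h2)) (lt_irrefl a)
      simp only [cls, Finset.mem_filter, Finset.mem_powersetCard_univ]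
      refine ⟨?_, ?_, ?_⟩
      · rw [Finset.card_union_of_disjoint hdisj, hac, hbc]; omega
      · intro hmem
        rcases Finset.mem_union.1 hmem with h | h
        · exact absurd (hAlt p h) (lt_irrefl p)
        · exact absurd (hBgt p h) (lt_irrefl p)
      · rw [cnt]
        have : (pq.1 ∪ pq.2).filter (· < p) = pq.1 := by
          ext a
          simp only [Finset.mem_filter, Finset.mem_union]
          constructor
          · rintro ⟨h | h, hlt⟩
            · exact h
            · exact absurd ((hBgt a h).trans hlt) (lt_irrefl p)
          · intro h; exact ⟨Or.inl h, hAlt a h⟩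
        rw [this, hac]
    case refine_3 =>
      intro S hS
      simp only [cls, Finset.mem_filter, Finset.mem_powersetCard_univ] at hS
      obtain ⟨hcard, hpS, hcnt⟩ := hS
      ext a
      simp only [Finset.mem_union, Finset.mem_filter]
      constructor
      · rintro (⟨h, _⟩ | ⟨h, _⟩) <;> exact h
      · intro ha
        rcases lt_or_gt_of_ne (fun h : a = p => hpS (h ▸ ha)) with h | h
        · exact Or.inl ⟨ha, h⟩
        · exact Or.inr ⟨ha, h⟩
    case refine_4 =>
      intro pq hpq
      rw [Finset.mem_product, Finset.mem_powersetCard, Finset.mem_powersetCard] at hpq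
      obtain ⟨⟨ha, hac⟩, hb, hbc⟩ := hpq
      have hAlt : ∀ a ∈ pq.1, a < p := fun a h => Finset.mem_Iio.1 (ha h)
      have hBgt : ∀ a ∈ pq.2, p < a := fun a h => Finset.mem_Ioi.1 (hb h)
      have e1 : (pq.1 ∪ pq.2).filter (· < p) = pq.1 := by
        ext a
        simp only [Finset.mem_filter, Finset.mem_union]
        constructor
        · rintro ⟨h | h, hlt⟩
          · exact h
          · exact absurd ((hBgt a h).trans hlt) (lt_irrefl p)
        · intro h; exact ⟨Or.inl h, hAlt a h⟩
      have e2 : (pq.1 ∪ pq.2).filter (p < ·) = pq.2 := by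
        ext a
        simp only [Finset.mem_filter, Finset.mem_union]
        constructor
        · rintro ⟨h | h, hlt⟩
          · exact absurd (hlt.trans (hAlt a h)) (lt_irrefl p)
          · exact h
        · intro h; exact ⟨Or.inr h, hBgt a h⟩
      rw [Prod.ext_iff]
      exact ⟨e1, e2⟩
  rw [key, Finset.card_product, Finset.card_powersetCard, Finset.card_powersetCard,
    Fin.card_Iio, Fin.card_Ioi]

lemma cls_empty (t : ℕ) (p : Fin n) (c : ℕ) (hc : t < c) : cls t p c = ∅ := by
  apply Finset.eq_empty_of_forall_notMem
  intro S hS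
  simp only [cls, Finset.mem_filter, Finset.mem_powersetCard_univ] at hS
  obtain ⟨hcard, _, hcnt⟩ := hS
  have : cnt p S ≤ S.card := Finset.card_le_card (Finset.filter_subset _ _)
  omega

lemma card_clsTop (t : ℕ) (p : Fin n) (ht : 1 ≤ t) :
    ((Finset.univ.powersetCard t).filter (fun S : Finset (Fin n) => p ∈ S)).card
      = Nat.choose (n - 1) (t - 1) := by
  have key : ((Finset.univ.powersetCard t).filter (fun S : Finset (Fin n) => p ∈ S)).card
      = ((Finset.univ.erase p).powersetCard (t - 1)).card := by
    refine Finset.card_bij' (fun S _ => S.erase p) (fun T _ => insert p T) ?_ ?_ ?_ ?_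
    case refine_1 =>
      intro S hS
      rw [Finset.mem_filter, Finset.mem_powersetCard_univ] at hS
      rw [Finset.mem_powersetCard]
      exact ⟨Finset.erase_subset_erase p (Finset.subset_univ S),
        by rw [Finset.card_erase_of_mem hS.2, hS.1]⟩
    case refine_2 =>
      intro T hT
      rw [Finset.mem_powersetCard] at hT
      have hpT : p ∉ T := fun h => (Finset.mem_erase.1 (hT.1 h)).1 rfl
      rw [Finset.mem_filter, Finset.mem_powersetCard_univ]
      refine ⟨?_, Finset.mem_insert_self p T⟩
      rw [Finset.card_insert_of_notMem hpT, hT.2]; omega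
    case refine_3 =>
      intro S hS
      rw [Finset.mem_filter] at hS
      exact Finset.insert_erase hS.2
    case refine_4 =>
      intro T hT
      rw [Finset.mem_powersetCard] at hT
      exact Finset.erase_insert (fun h => (Finset.mem_erase.1 (hT.1 h)).1 rfl)
  rw [key, Finset.card_powersetCard, Finset.card_erase_of_mem (Finset.mem_univ p),
    Finset.card_univ, Fintype.card_fin]

end DelAux2

namespace DelAux3

lemma sub_mul_choose (A d : ℕ) : (A - d) * A.choose d = (d+1) * A.choose (d+1) := by
  cases A with
  | zero =>
    cases d <;> simp
  | succ A' =>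
    have h1 := Nat.add_one_mul_choose_eq A' d
    have h2 := Nat.choose_mul_succ_eq A' d
    calc (A' + 1 - d) * (A'+1).choose d = (A'+1).choose d * (A' + 1 - d) := Nat.mul_comm _ _
      _ = A'.choose d * (A' + 1) := h2.symm
      _ = (A' + 1) * A'.choose d := Nat.mul_comm _ _
      _ = (A'+1).choose (d+1) * (d+1) := h1
      _ = (d+1) * (A'+1).choose (d+1) := Nat.mul_comm _ _

lemma step_eq (A B t d : ℕ) (hd : d < t) :
    ((d+1) * (B - (t - d - 1))) * (A.choose (d+1) * B.choose (t - d - 1))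
      = ((A - d) * (t - d)) * (A.choose d * B.choose (t - d)) := by
  have h1 := sub_mul_choose A d
  have h2 := sub_mul_choose B (t - d - 1)
  have h3 : t - d - 1 + 1 = t - d := by omega
  rw [h3] at h2
  calc ((d+1) * (B - (t - d - 1))) * (A.choose (d+1) * B.choose (t - d - 1))
      = ((d+1) * A.choose (d+1)) * ((B - (t - d - 1)) * B.choose (t - d - 1)) := by ring
    _ = ((A - d) * A.choose d) * ((t - d) * B.choose (t - d)) := by rw [← h1, h2]
    _ = ((A - d) * (t - d)) * (A.choose d * B.choose (t - d)) := by ring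

lemma choose_step_le (A B t d : ℕ) (hd : d < t) (hB : t ≤ B)
    (hcross : (A - d) * (t - d) ≤ (d+1) * (B - (t - d - 1))) :
    A.choose (d+1) * B.choose (t - d - 1) ≤ A.choose d * B.choose (t - d) := by
  have he := step_eq A B t d hd
  have hpos : 0 < (d+1) * (B - (t - d - 1)) := by
    have : 0 < B - (t - d - 1) := by omega
    positivity
  apply Nat.le_of_mul_le_mul_left _ hpos
  calc (d+1) * (B - (t - d - 1)) * (A.choose (d+1) * B.choose (t - d - 1))
      = ((A - d) * (t - d)) * (A.choose d * B.choose (t - d)) := he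
    _ ≤ (d+1) * (B - (t - d - 1)) * (A.choose d * B.choose (t - d)) :=
        Nat.mul_le_mul_right _ hcross

lemma choose_step_ge (A B t d : ℕ) (hd : d < t) (hB : t ≤ B)
    (hcross : (d+1) * (B - (t - d - 1)) ≤ (A - d) * (t - d)) :
    A.choose d * B.choose (t - d) ≤ A.choose (d+1) * B.choose (t - d - 1) := by
  have he := step_eq A B t d hd
  have hpos : 0 < (d+1) * (B - (t - d - 1)) := by
    have : 0 < B - (t - d - 1) := by omega
    positivity
  apply Nat.le_of_mul_le_mul_left _ hpos
  calc (d+1) * (B - (t - d - 1)) * (A.choose d * B.choose (t - d))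
      ≤ ((A - d) * (t - d)) * (A.choose d * B.choose (t - d)) :=
        Nat.mul_le_mul_right _ hcross
    _ = (d+1) * (B - (t - d - 1)) * (A.choose (d+1) * B.choose (t - d - 1)) := he.symm

lemma cross_mono (v t d u : ℕ) (htu : t = 2*d+2+u) :
    (d+1) * (v*t + 2*v + 2 + d) ≤ ((d+1+u) + v*t) * (d+2+u) := by
  subst htu
  nlinarith [Nat.zero_le (v*u), Nat.zero_le (u*u), Nat.zero_le (u*d), Nat.zero_le (v*d)]

lemma tele (f : ℕ → ℕ) (K : ℕ) (hmono : ∀ d, K ≤ d → f (d+1) ≤ f d) :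
    ∀ L, K ≤ L → (∑ d ∈ Finset.Icc K L, (f d - f (d+1))) = f K - f (L+1) := by
  have hle : ∀ d, K ≤ d → f d ≤ f K := by
    intro d hd
    induction d with
    | zero => simp_all
    | succ m ih =>
      rcases Nat.lt_or_ge K (m+1) with h | h
      · exact le_trans (hmono m (by omega)) (ih (by omega))
      · have : K = m + 1 := by omega
        rw [this]
  intro L
  induction L with
  | zero =>
    intro hK
    rw [show K = 0 by omega, Finset.Icc_self, Finset.sum_singleton]
  | succ L ih =>
    intro hK
    rcases Nat.lt_or_ge L K with h | h
    · rw [show K = L + 1 by omega, Finset.Icc_self, Finset.sum_singleton]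
    · rw [Finset.sum_Icc_succ_top (by omega : K ≤ L + 1), ih h]
      have h1 : f (L+1+1) ≤ f (L+1) := hmono (L+1) (by omega)
      have h2 : f (L+1) ≤ f K := hle (L+1) (by omega)
      omega

end DelAux3

namespace DelAux4
lemma count_map_filter {α β : Type*} [DecidableEq β] (f : α → β) (D : Finset α) (b : β)
    [DecidablePred fun a => f a = b] :
    (Multiset.map f D.val).count b = (D.filter (fun a => f a = b)).card := by
  classical
  rw [Multiset.count_map]
  have : (D.filter (fun a => f a = b)).card = Multiset.card (D.val.filter (fun a => f a = b)) := by
    simp [Finset.card, Finset.filter]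
  rw [this]
  congr 1
  apply Multiset.filter_congr
  intro x _
  exact eq_comm
end DelAux4
open Finset

def fib {n : ℕ} (t : ℕ) (p : Fin n) (v : ℕ) : Finset (Finset (Fin n)) :=
  (Finset.univ.powersetCard t).filter (fun S => DelAux.ix p S = v)

namespace FibLayer

lemma fib_lt {n : ℕ} (t : ℕ) (p : Fin n) (v : ℕ) (hv : v < n - t) :
    fib t p v = if v ≤ (p : ℕ) then DelAux2.cls t p ((p : ℕ) - v) else ∅ := by
  classical
  split_ifs with hvp
  · ext S
    simp only [fib, DelAux2.cls, Finset.mem_filter, Finset.mem_powersetCard_univ]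
    constructor
    · rintro ⟨hcard, hix⟩
      by_cases hps : p ∈ S
      · exfalso; rw [DelAux.ix, if_pos hps, hcard] at hix; omega
      · rw [DelAux.ix, if_neg hps] at hix
        have h1 := DelAux.cnt_le p S
        exact ⟨hcard, hps, by omega⟩
    · rintro ⟨hcard, hps, hcnt⟩
      refine ⟨hcard, ?_⟩
      rw [DelAux.ix, if_neg hps, hcnt]
      omega
  · ext S
    simp only [fib, Finset.mem_filter, Finset.mem_powersetCard_univ, Finset.notMem_empty,
      iff_false, not_and]
    intro hcard hix
    by_cases hps : p ∈ S
    · rw [DelAux.ix, if_pos hps, hcard] at hix; omega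
    · rw [DelAux.ix, if_neg hps] at hix; have := DelAux.cnt_le p S; omega

lemma fib_top {n : ℕ} (t : ℕ) (p : Fin n) (hp : (p : ℕ) < n - t) :
    fib t p (n - t) = (Finset.univ.powersetCard t).filter (fun S => p ∈ S) := by
  classical
  ext S
  simp only [fib, Finset.mem_filter, Finset.mem_powersetCard_univ]
  constructor
  · rintro ⟨hcard, hix⟩
    refine ⟨hcard, ?_⟩
    by_contra hps
    rw [DelAux.ix, if_neg hps] at hix
    have := DelAux.cnt_le p S
    omega
  · rintro ⟨hcard, hps⟩
    exact ⟨hcard, by rw [DelAux.ix, if_pos hps, hcard]⟩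

lemma sum_fib {n : ℕ} (t : ℕ) (p : Fin n) (hp : (p : ℕ) < n - t) :
    ∑ v ∈ Finset.range (n - t + 1), (fib t p v).card = n.choose t := by
  classical
  have h := Finset.card_eq_sum_card_fiberwise (f := fun S => DelAux.ix p S)
    (s := Finset.univ.powersetCard t) (t := Finset.range (n - t + 1)) ?_
  · rw [show (∑ v ∈ Finset.range (n - t + 1), (fib t p v).card)
        = ∑ v ∈ Finset.range (n - t + 1),
            ((Finset.univ.powersetCard t).filter (fun S => DelAux.ix p S = v)).card from rfl]
    rw [← h, Finset.card_powersetCard, Finset.card_univ, Fintype.card_fin]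
  · intro S hS
    rw [Finset.mem_coe, Finset.mem_powersetCard_univ] at hS
    simp only [Finset.mem_coe, Finset.mem_range]
    have := DelAux.ix_le p S (by rw [hS]; exact hp)
    rw [hS] at this
    omega

end FibLayer
namespace FibLayer

lemma key_sums (t h n : ℕ) (ht : 2 ≤ t) (hh : 1 ≤ h) (hn : n = 2*(h*t) + 2*h)
    (p1 p2 : Fin n) (hp1v : (p1 : ℕ) = h*t - 1) (hp2v : (p2 : ℕ) = h*t) :
    ∑ v ∈ Finset.range (n - t + 1), ((fib t p1 v).card - (fib t p2 v).card)
      = (h*t - 1).choose (t/2) * (h*(t+2) - 1).choose ((t+1)/2) := by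
  classical
  have hB : h*(t+2) = h*t + 2*h := by ring
  have hta : t ≤ h*t := Nat.le_mul_of_pos_left t hh
  have hha : h ≤ h*t := Nat.le_mul_of_pos_right h (by omega)
  set A := h*t - 1 with hA
  set Bb := h*(t+2) - 1 with hBb
  set K := t/2 with hK
  set g : ℕ → ℕ := fun d => if d ≤ t then A.choose d * Bb.choose (t - d) else 0 with hg
  have hp1lt : (p1 : ℕ) < n - t := by omega
  have hp2lt : (p2 : ℕ) < n - t := by omega
  have hgval : ∀ d, d ≤ t → g d = A.choose d * Bb.choose (t - d) := by
    intro d hd; simp only [hg]; rw [if_pos hd]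
  have hg0 : ∀ d, t < d → g d = 0 := by
    intro d hd; simp only [hg]; rw [if_neg (by omega)]
  have hT1 : ∀ d, d ≤ t → d ≤ (p1 : ℕ) →
      (fib t p1 ((p1 : ℕ) - d)).card = A.choose d * (Bb+1).choose (t - d) := by
    intro d hdt hdp
    rw [fib_lt t p1 _ (by omega), if_pos (by omega)]
    rw [show (p1 : ℕ) - ((p1 : ℕ) - d) = d from by omega, DelAux2.card_cls t p1 d hdt]
    rw [show ((p1 : ℕ) : ℕ).choose d = A.choose d from by rw [hp1v]]
    rw [show n - 1 - (p1 : ℕ) = Bb + 1 from by omega]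
  have hT2 : ∀ d, d + 1 ≤ t → d ≤ (p1 : ℕ) →
      (fib t p2 ((p1 : ℕ) - d)).card = (A+1).choose (d+1) * Bb.choose (t - d - 1) := by
    intro d hdt hdp
    rw [fib_lt t p2 _ (by omega), if_pos (by omega)]
    rw [show (p2 : ℕ) - ((p1 : ℕ) - d) = d + 1 from by omega,
      DelAux2.card_cls t p2 (d+1) (by omega)]
    rw [show ((p2 : ℕ) : ℕ).choose (d+1) = (A+1).choose (d+1) from by rw [hp2v]; congr 1; omega]
    rw [show n - 1 - (p2 : ℕ) = Bb from by omega]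
    rw [show t - (d+1) = t - d - 1 from by omega]
  have hsplit1 : ∀ d, d < t → (Bb+1).choose (t - d) = Bb.choose (t - d - 1) + Bb.choose (t - d) := by
    intro d hd
    have base := Nat.choose_succ_succ Bb (t - d - 1)
    simp only [Nat.succ_eq_add_one] at base
    rw [show t - d - 1 + 1 = t - d from by omega] at base
    exact base
  have hsplit2 : ∀ d : ℕ, (A+1).choose (d+1) = A.choose d + A.choose (d+1) :=
    fun d => Nat.choose_succ_succ A d
  have hBge : t ≤ Bb := by omega
  have hmono_desc : ∀ d, K ≤ d → g (d+1) ≤ g d := by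
    intro d hd
    by_cases hdt : d + 1 ≤ t
    · rw [hgval (d+1) hdt, hgval d (by omega), show t - (d+1) = t - d - 1 from by omega]
      apply DelAux3.choose_step_le A Bb t d (by omega) hBge
      have f1 : A - d ≤ Bb - (t - d - 1) := by omega
      have f2 : t - d ≤ d + 1 := by omega
      calc (A - d) * (t - d) ≤ (Bb - (t - d - 1)) * (d+1) := Nat.mul_le_mul f1 f2
        _ = (d+1) * (Bb - (t - d - 1)) := Nat.mul_comm _ _
    · rw [hg0 (d+1) (by omega)]; exact Nat.zero_le _
  have hmono_asc : ∀ d, d < K → g d ≤ g (d+1) := by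
    intro d hd
    have hdt : d + 1 ≤ t := by omega
    rw [hgval (d+1) hdt, hgval d (by omega), show t - (d+1) = t - d - 1 from by omega]
    apply DelAux3.choose_step_ge A Bb t d (by omega) hBge
    obtain ⟨v, hv⟩ : ∃ v, h = v + 1 := ⟨h - 1, by omega⟩
    obtain ⟨u, hu⟩ : ∃ u, t = 2*d + 2 + u := ⟨t - 2*d - 2, by omega⟩
    have hvt : h * t = v * t + t := by rw [hv]; ring
    have e1 : Bb - (t - d - 1) = v*t + 2*v + 2 + d := by omega
    have e2 : A - d = (d + 1 + u) + v*t := by omega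
    have e3 : t - d = d + 2 + u := by omega
    rw [e1, e2, e3]
    exact DelAux3.cross_mono v t d u hu
  set t' := min t A with ht'
  have hKt' : K ≤ t' := by omega
  set W := (Finset.Icc K t').image (fun d => (p1 : ℕ) - d) with hW
  have hWsub : W ⊆ Finset.range (n - t + 1) := by
    intro v hv
    simp only [hW, Finset.mem_image, Finset.mem_Icc] at hv
    obtain ⟨d, ⟨hd1, hd2⟩, rfl⟩ := hv
    simp only [Finset.mem_range]
    omega
  have hzero : ∀ v ∈ Finset.range (n - t + 1), v ∉ W →
      (fib t p1 v).card - (fib t p2 v).card = 0 := by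
    intro v hvV hvW
    apply Nat.sub_eq_zero_of_le
    simp only [Finset.mem_range] at hvV
    by_cases hvt : v = n - t
    · subst hvt
      rw [fib_top t p1 hp1lt, fib_top t p2 hp2lt, DelAux2.card_clsTop t p1 (by omega),
        DelAux2.card_clsTop t p2 (by omega)]
    · have hvlt : v < n - t := by omega
      by_cases hvp : v ≤ (p1 : ℕ)
      · have hvd : v = (p1 : ℕ) - ((p1 : ℕ) - v) := by omega
        set d := (p1 : ℕ) - v with hd
        have hdK : d < K ∨ t' < d := by
          by_contra hcon
          push_neg at hcon
          exact hvW (Finset.mem_image.2 ⟨d, Finset.mem_Icc.2 ⟨hcon.1, hcon.2⟩, by omega⟩)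
        rcases hdK with hdK | hdK
        · rw [hvd, hT1 d (by omega) (by omega), hT2 d (by omega) (by omega),
            hsplit1 d (by omega), hsplit2 d]
          have hmono := hmono_asc d hdK
          rw [hgval d (by omega), hgval (d+1) (by omega),
            show t - (d+1) = t - d - 1 from by omega] at hmono
          have ex1 : A.choose d * (Bb.choose (t - d - 1) + Bb.choose (t - d))
              = A.choose d * Bb.choose (t - d - 1) + A.choose d * Bb.choose (t - d) := by ring
          have ex2 : (A.choose d + A.choose (d+1)) * Bb.choose (t - d - 1)
              = A.choose d * Bb.choose (t - d - 1) + A.choose (d+1) * Bb.choose (t - d - 1) := by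
            ring
          rw [ex1, ex2]
          omega
        · have hdt : t < d := by omega
          rw [hvd, fib_lt t p1 _ (by omega), if_pos (by omega)]
          rw [show (p1 : ℕ) - ((p1 : ℕ) - d) = d from by omega, DelAux2.cls_empty t p1 d hdt]
          simp
      · rw [fib_lt t p1 v hvlt, if_neg hvp]
        simp
  have hinj : ∀ d ∈ Finset.Icc K t', ∀ e ∈ Finset.Icc K t',
      (p1 : ℕ) - d = (p1 : ℕ) - e → d = e := by
    intro d hd e he hde
    simp only [Finset.mem_Icc] at hd he
    omega
  have hpt : ∀ d ∈ Finset.Icc K t',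
      (fib t p1 ((p1 : ℕ) - d)).card - (fib t p2 ((p1 : ℕ) - d)).card = g d - g (d+1) := by
    intro d hd
    simp only [Finset.mem_Icc] at hd
    by_cases hdt : d + 1 ≤ t
    · rw [hT1 d (by omega) (by omega), hT2 d hdt (by omega), hsplit1 d (by omega), hsplit2 d,
        hgval d (by omega), hgval (d+1) (by omega), show t - (d+1) = t - d - 1 from by omega]
      have ex1 : A.choose d * (Bb.choose (t - d - 1) + Bb.choose (t - d))
          = A.choose d * Bb.choose (t - d - 1) + A.choose d * Bb.choose (t - d) := by ring
      have ex2 : (A.choose d + A.choose (d+1)) * Bb.choose (t - d - 1)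
          = A.choose d * Bb.choose (t - d - 1) + A.choose (d+1) * Bb.choose (t - d - 1) := by ring
      rw [ex1, ex2]
      omega
    · have hdeq : d = t := by omega
      have htA : t ≤ A := by omega
      rw [hdeq, hT1 t le_rfl (by omega)]
      have h0 : (fib t p2 ((p1 : ℕ) - t)).card = 0 := by
        rw [fib_lt t p2 _ (by omega), if_pos (by omega)]
        rw [show (p2 : ℕ) - ((p1 : ℕ) - t) = t + 1 from by omega,
          DelAux2.cls_empty t p2 (t+1) (by omega)]
        simp
      rw [h0, hgval t le_rfl, hg0 (t+1) (by omega)]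
      simp [Nat.sub_self]
  rw [← Finset.sum_subset hWsub hzero, hW, Finset.sum_image hinj,
    Finset.sum_congr rfl hpt, DelAux3.tele g K hmono_desc t' hKt']
  have hgt' : g (t' + 1) = 0 := by
    by_cases htA : t ≤ A
    · rw [show t' = t from by omega]
      exact hg0 (t+1) (by omega)
    · rw [show t' = A from by omega, hgval (A+1) (by omega)]
      rw [Nat.choose_eq_zero_of_lt (by omega)]
      simp
  rw [hgt', Nat.sub_zero, hgval K (by omega), show t - K = (t+1)/2 from by omega]

lemma min_sum (t h n : ℕ) (ht : 2 ≤ t) (hh : 1 ≤ h) (hn : n = 2*(h*t) + 2*h)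
    (p1 p2 : Fin n) (hp1v : (p1 : ℕ) = h*t - 1) (hp2v : (p2 : ℕ) = h*t) :
    ∑ v ∈ Finset.range (n - t + 1), min (fib t p1 v).card (fib t p2 v).card
      = n.choose t - (h*t - 1).choose (t/2) * (h*(t+2) - 1).choose ((t+1)/2) := by
  classical
  have hta : t ≤ h*t := Nat.le_mul_of_pos_left t hh
  have hha : h ≤ h*t := Nat.le_mul_of_pos_right h (by omega)
  have h1 := sum_fib t p1 (by omega : (p1 : ℕ) < n - t)
  have h2 := key_sums t h n ht hh hn p1 p2 hp1v hp2v
  have h3 : ∑ v ∈ Finset.range (n - t + 1),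
      (min (fib t p1 v).card (fib t p2 v).card + ((fib t p1 v).card - (fib t p2 v).card))
      = ∑ v ∈ Finset.range (n - t + 1), (fib t p1 v).card :=
    Finset.sum_congr rfl (fun v _ => by omega)
  rw [Finset.sum_add_distrib] at h3
  omega

end FibLayer

/-- For `n = h(2t+2)`, `x1 = 0^{ht-1} 1 0^{h(t+2)}` (single `1` at 0-indexed position `ht - 1`)
and `x2 = 0^{ht} 1 0^{h(t+2)-1}` (single `1` at position `ht`), with
`M = C(n,t) - C(ht-1,⌊t/2⌋)·C(h(t+2)-1,⌈t/2⌉)`: exactly `M` channels with distinct deletion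
vectors of weight exactly `t` can produce equal output multisets from `x1` and `x2`,
so exactly `M + 1` channels distinguish them in the multiset model. -/
theorem multiset_model_exact_channel_number_extremal
    (t h : ℕ) (ht : 2 ≤ t) (hh : 1 ≤ h) :
    let n := h * (2 * t + 2)
    let x1 : Fin n → Fin 2 := fun i => if (i : ℕ) = h * t - 1 then 1 else 0
    let x2 : Fin n → Fin 2 := fun i => if (i : ℕ) = h * t then 1 else 0
    let M := n.choose t - (h * t - 1).choose (t / 2) * (h * (t + 2) - 1).choose ((t + 1) / 2)
    (∃ D1 D2 : Finset (Finset (Fin n)),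
      (∀ S ∈ D1, S.card = t) ∧ (∀ S ∈ D2, S.card = t) ∧
      D1.card = M ∧ D2.card = M ∧
      Multiset.map (delWord x1) D1.val = Multiset.map (delWord x2) D2.val) ∧
    (∀ D1 D2 : Finset (Finset (Fin n)),
      (∀ S ∈ D1, S.card = t) → (∀ S ∈ D2, S.card = t) →
      D1.card = D2.card →
      Multiset.map (delWord x1) D1.val = Multiset.map (delWord x2) D2.val →
      D1.card ≤ M) := by
  classical
  intro n x1 x2 M
  have hndef : n = h * (2 * t + 2) := rfl
  have hx1def : x1 = fun i : Fin n => if (i : ℕ) = h * t - 1 then 1 else 0 := rfl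
  have hx2def : x2 = fun i : Fin n => if (i : ℕ) = h * t then 1 else 0 := rfl
  have hMdef : M = n.choose t
      - (h * t - 1).choose (t / 2) * (h * (t + 2) - 1).choose ((t + 1) / 2) := rfl
  clear_value M x2 x1 n
  have hn : n = 2 * (h * t) + 2 * h := by rw [hndef]; ring
  have hta : t ≤ h * t := Nat.le_mul_of_pos_left t hh
  have hha : h ≤ h * t := Nat.le_mul_of_pos_right h (by omega)
  have hp1n : h * t - 1 < n := by omega
  have hp2n : h * t < n := by omega
  set p1 : Fin n := ⟨h * t - 1, hp1n⟩ with hp1def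
  set p2 : Fin n := ⟨h * t, hp2n⟩ with hp2def
  have hp1v : (p1 : ℕ) = h * t - 1 := rfl
  have hp2v : (p2 : ℕ) = h * t := rfl
  have hp1lt : (p1 : ℕ) < n - t := by omega
  have hp2lt : (p2 : ℕ) < n - t := by omega
  have hx1p : x1 = fun i : Fin n => if (i : ℕ) = (p1 : ℕ) then 1 else 0 := by
    rw [hp1v]; exact hx1def
  have hx2p : x2 = fun i : Fin n => if (i : ℕ) = (p2 : ℕ) then 1 else 0 := by
    rw [hp2v]; exact hx2def
  have hdel1 : ∀ S : Finset (Fin n), S.card = t →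
      delWord x1 S = DelAux.outList (n - t) (DelAux.ix p1 S) := by
    intro S hS
    rw [hx1p, DelAux.delWord_single p1 S, hS]
  have hdel2 : ∀ S : Finset (Fin n), S.card = t →
      delWord x2 S = DelAux.outList (n - t) (DelAux.ix p2 S) := by
    intro S hS
    rw [hx2p, DelAux.delWord_single p2 S, hS]
  have hix1le : ∀ S : Finset (Fin n), S.card = t → DelAux.ix p1 S ≤ n - t := by
    intro S hS
    have := DelAux.ix_le p1 S (by rw [hS]; exact hp1lt)
    rwa [hS] at this
  have hix2le : ∀ S : Finset (Fin n), S.card = t → DelAux.ix p2 S ≤ n - t := by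
    intro S hS
    have := DelAux.ix_le p2 S (by rw [hS]; exact hp2lt)
    rwa [hS] at this
  have hminsum := FibLayer.min_sum t h n ht hh hn p1 p2 hp1v hp2v
  have hMeq : M = ∑ v ∈ Finset.range (n - t + 1), min (fib t p1 v).card (fib t p2 v).card := by
    rw [hminsum, hMdef]
  constructor
  · -- existence of extremal D1, D2
    have hex1 : ∀ v : ℕ, ∃ E, E ⊆ fib t p1 v ∧
        E.card = min (fib t p1 v).card (fib t p2 v).card := by
      intro v
      obtain ⟨E, hE1, hE2⟩ := Finset.exists_subset_card_eq (min_le_left _ (fib t p2 v).card)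
      exact ⟨E, hE1, hE2⟩
    have hex2 : ∀ v : ℕ, ∃ E, E ⊆ fib t p2 v ∧
        E.card = min (fib t p1 v).card (fib t p2 v).card := by
      intro v
      obtain ⟨E, hE1, hE2⟩ := Finset.exists_subset_card_eq (min_le_right (fib t p1 v).card _)
      exact ⟨E, hE1, hE2⟩
    choose E1 hE1sub hE1card using hex1
    choose E2 hE2sub hE2card using hex2
    have hE1mem : ∀ v S, S ∈ E1 v → S.card = t ∧ DelAux.ix p1 S = v := by
      intro v S hS
      have := hE1sub v hS
      simpa only [fib, Finset.mem_filter, Finset.mem_powersetCard_univ] using this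
    have hE2mem : ∀ v S, S ∈ E2 v → S.card = t ∧ DelAux.ix p2 S = v := by
      intro v S hS
      have := hE2sub v hS
      simpa only [fib, Finset.mem_filter, Finset.mem_powersetCard_univ] using this
    refine ⟨(Finset.range (n - t + 1)).biUnion E1, (Finset.range (n - t + 1)).biUnion E2,
      ?_, ?_, ?_, ?_, ?_⟩
    · intro S hS
      obtain ⟨v, _, hSv⟩ := Finset.mem_biUnion.1 hS
      exact (hE1mem v S hSv).1
    · intro S hS
      obtain ⟨v, _, hSv⟩ := Finset.mem_biUnion.1 hS
      exact (hE2mem v S hSv).1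
    · rw [Finset.card_biUnion, hMeq]
      · exact Finset.sum_congr rfl (fun v _ => hE1card v)
      · intro v _ w _ hvw
        rw [Function.onFun, Finset.disjoint_left]
        intro S hSv hSw
        exact hvw (((hE1mem v S hSv).2).symm.trans ((hE1mem w S hSw).2))
    · rw [Finset.card_biUnion, hMeq]
      · exact Finset.sum_congr rfl (fun v _ => hE2card v)
      · intro v _ w _ hvw
        rw [Function.onFun, Finset.disjoint_left]
        intro S hSv hSw
        exact hvw (((hE2mem v S hSv).2).symm.trans ((hE2mem w S hSw).2))
    · refine Multiset.ext.2 (fun w => ?_)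
      rw [DelAux4.count_map_filter, DelAux4.count_map_filter]
      by_cases hw : ∃ v, v < n - t + 1 ∧ w = DelAux.outList (n - t) v
      · obtain ⟨v0, hv0, rfl⟩ := hw
        have e1 : ((Finset.range (n - t + 1)).biUnion E1).filter
            (fun S => delWord x1 S = DelAux.outList (n - t) v0) = E1 v0 := by
          ext S
          simp only [Finset.mem_filter, Finset.mem_biUnion, Finset.mem_range]
          constructor
          · rintro ⟨⟨u, hu, hSu⟩, heq⟩
            obtain ⟨hcard, hixu⟩ := hE1mem u S hSu
            rw [hdel1 S hcard, hixu] at heq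
            have hule : u ≤ n - t := by
              have := hix1le S hcard; omega
            have : u = v0 := DelAux.outList_inj hule (by omega) heq
            rwa [← this]
          · intro hS
            obtain ⟨hcard, hix⟩ := hE1mem v0 S hS
            exact ⟨⟨v0, hv0, hS⟩, by rw [hdel1 S hcard, hix]⟩
        have e2 : ((Finset.range (n - t + 1)).biUnion E2).filter
            (fun S => delWord x2 S = DelAux.outList (n - t) v0) = E2 v0 := by
          ext S
          simp only [Finset.mem_filter, Finset.mem_biUnion, Finset.mem_range]
          constructor
          · rintro ⟨⟨u, hu, hSu⟩, heq⟩
            obtain ⟨hcard, hixu⟩ := hE2mem u S hSu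
            rw [hdel2 S hcard, hixu] at heq
            have hule : u ≤ n - t := by
              have := hix2le S hcard; omega
            have : u = v0 := DelAux.outList_inj hule (by omega) heq
            rwa [← this]
          · intro hS
            obtain ⟨hcard, hix⟩ := hE2mem v0 S hS
            exact ⟨⟨v0, hv0, hS⟩, by rw [hdel2 S hcard, hix]⟩
        rw [e1, e2, hE1card, hE2card]
      · have e1 : ((Finset.range (n - t + 1)).biUnion E1).filter
            (fun S => delWord x1 S = w) = ∅ := by
          rw [Finset.filter_eq_empty_iff]
          intro S hS
          obtain ⟨u, _, hSu⟩ := Finset.mem_biUnion.1 hS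
          obtain ⟨hcard, hixu⟩ := hE1mem u S hSu
          rw [hdel1 S hcard]
          intro heq
          exact hw ⟨DelAux.ix p1 S, by have := hix1le S hcard; omega, heq.symm⟩
        have e2 : ((Finset.range (n - t + 1)).biUnion E2).filter
            (fun S => delWord x2 S = w) = ∅ := by
          rw [Finset.filter_eq_empty_iff]
          intro S hS
          obtain ⟨u, _, hSu⟩ := Finset.mem_biUnion.1 hS
          obtain ⟨hcard, hixu⟩ := hE2mem u S hSu
          rw [hdel2 S hcard]
          intro heq
          exact hw ⟨DelAux.ix p2 S, by have := hix2le S hcard; omega, heq.symm⟩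
        rw [e1, e2]
  · -- upper bound
    intro D1 D2 h1 h2 _ hmul
    have key : ∀ v, v < n - t + 1 →
        (D1.filter (fun S => DelAux.ix p1 S = v)).card
          = (D2.filter (fun S => DelAux.ix p2 S = v)).card := by
      intro v hv
      have c1 : (Multiset.map (delWord x1) D1.val).count (DelAux.outList (n - t) v)
          = (D1.filter (fun S => DelAux.ix p1 S = v)).card := by
        rw [DelAux4.count_map_filter]
        congr 1
        apply Finset.filter_congr
        intro S hS
        rw [hdel1 S (h1 S hS)]
        constructor
        · intro he
          exact DelAux.outList_inj (hix1le S (h1 S hS)) (by omega) he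
        · rintro rfl; rfl
      have c2 : (Multiset.map (delWord x2) D2.val).count (DelAux.outList (n - t) v)
          = (D2.filter (fun S => DelAux.ix p2 S = v)).card := by
        rw [DelAux4.count_map_filter]
        congr 1
        apply Finset.filter_congr
        intro S hS
        rw [hdel2 S (h2 S hS)]
        constructor
        · intro he
          exact DelAux.outList_inj (hix2le S (h2 S hS)) (by omega) he
        · rintro rfl; rfl
      rw [← c1, ← c2, hmul]
    have hfib : D1.card = ∑ v ∈ Finset.range (n - t + 1),
        (D1.filter (fun S => DelAux.ix p1 S = v)).card := by
      apply Finset.card_eq_sum_card_fiberwise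
      intro S hS
      simp only [Finset.mem_coe, Finset.mem_range]
      have := hix1le S (h1 S hS)
      omega
    rw [hfib, hMeq]
    apply Finset.sum_le_sum
    intro v hv
    simp only [Finset.mem_range] at hv
    apply le_min
    · apply Finset.card_le_card
      intro S hS
      simp only [Finset.mem_filter] at hS
      simp only [fib, Finset.mem_filter, Finset.mem_powersetCard_univ]
      exact ⟨h1 S hS.1, hS.2⟩
    · rw [key v hv]
      apply Finset.card_le_card
      intro S hS
      simp only [Finset.mem_filter] at hS
      simp only [fib, Finset.mem_filter, Finset.mem_powersetCard_univ]
      exact ⟨h2 S hS.1, hS.2⟩
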